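/- Let 0 < β ≤ 1/2 and 0 ≤ α ≤ β/2, and let A = {a_1 < a_2 < ...} and B = {b_1 < b_2 < ...} be two infinite subsets of ℕ such that (1) a_i − b_i = o(a_i^{β−α}) as i → ∞; (2) A(n) − B(n) = O(n^{α}); and (3) there is a constant c > 0 with A(n) ≤ c·n^{β} and B(n) ≤ c·n^{β} for all n ∈ ℕ. Then, as the integer N → ∞, Σ_{n=0}^{∞} (1 − 1/N)^{2n} · (A(n) − B(n))^2 = o(N^{2β}). -/

import Mathlib

open Filter Asymptotics

/-- The counting function `A(n) = |{a ∈ A : a ≤ n}|`. -/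
noncomputable def countFn (A : Set ℕ) (n : ℕ) : ℕ := (A ∩ Set.Iic n).ncard

lemma countFn_eq_count (A : Set ℕ) (n : ℕ) [DecidablePred (· ∈ A)] :
    countFn A n = Nat.count (· ∈ A) (n + 1) := by
  rw [countFn, Nat.count_eq_card_filter_range, ← Set.ncard_coe_finset]
  congr 1
  ext x
  simp [Nat.lt_succ_iff, and_comm]

lemma countFn_mono (A : Set ℕ) : Monotone (countFn A) := by
  intro m n h
  exact Set.ncard_le_ncard (Set.inter_subset_inter_right _ (Set.Iic_subset_Iic.2 h))
    ((Set.finite_Iic n).inter_of_right _)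

lemma nth_le_iff (A : Set ℕ) (hA : A.Infinite) (i n : ℕ) [DecidablePred (· ∈ A)] :
    Nat.nth (· ∈ A) i ≤ n ↔ i < countFn A n := by
  rw [countFn_eq_count, ← Nat.lt_succ_iff, Nat.lt_nth_iff_count_lt (p := (· ∈ A)) hA]

lemma cast_max_sub_min (x y : ℕ) : ((max x y - min x y : ℕ) : ℝ) = |(x : ℝ) - y| := by
  rcases le_total x y with h | h
  · rw [max_eq_right h, min_eq_left h, Nat.cast_sub h, abs_sub_comm,
      abs_of_nonneg (by simp [h])]
  · rw [max_eq_left h, min_eq_right h, Nat.cast_sub h, abs_of_nonneg (by simp [h])]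

noncomputable def chi (A B : Set ℕ) (i n : ℕ) : ℝ :=
  if min (Nat.nth (· ∈ A) i) (Nat.nth (· ∈ B) i) ≤ n ∧
      n < max (Nat.nth (· ∈ A) i) (Nat.nth (· ∈ B) i) then 1 else 0

lemma chi_nonneg (A B : Set ℕ) (i n : ℕ) : 0 ≤ chi A B i n := by
  unfold chi; positivity

lemma chi_comm (A B : Set ℕ) (i n : ℕ) : chi A B i n = chi B A i n := by
  unfold chi; rw [min_comm, max_comm]

lemma one_sided (A B : Set ℕ) (hA : A.Infinite) (hB : B.Infinite)
    [DecidablePred (· ∈ A)] [DecidablePred (· ∈ B)]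
    (n R : ℕ) (hRA : countFn A n ≤ R) (h : countFn B n ≤ countFn A n) :
    (countFn A n : ℝ) - countFn B n ≤ ∑ i ∈ Finset.range R, chi A B i n := by
  have key : ∀ i ∈ Finset.Ico (countFn B n) (countFn A n), (1 : ℝ) ≤ chi A B i n := by
    intro i hi
    simp only [Finset.mem_Ico] at hi
    have ha : Nat.nth (· ∈ A) i ≤ n := (nth_le_iff A hA i n).2 hi.2
    have hb : n < Nat.nth (· ∈ B) i := by
      by_contra hc
      exact absurd ((nth_le_iff B hB i n).1 (not_lt.1 hc)) (not_lt.2 hi.1)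
    rw [chi, if_pos ⟨le_trans (min_le_left _ _) ha, lt_of_lt_of_le hb (le_max_right _ _)⟩]
  calc (countFn A n : ℝ) - countFn B n
      = ∑ i ∈ Finset.Ico (countFn B n) (countFn A n), (1 : ℝ) := by
        rw [Finset.sum_const, Nat.card_Ico, nsmul_eq_mul, mul_one, Nat.cast_sub h]
    _ ≤ ∑ i ∈ Finset.Ico (countFn B n) (countFn A n), chi A B i n :=
        Finset.sum_le_sum key
    _ ≤ ∑ i ∈ Finset.range R, chi A B i n := by
        apply Finset.sum_le_sum_of_subset_of_nonneg
        · intro i hi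
          simp only [Finset.mem_Ico] at hi
          exact Finset.mem_range.2 (lt_of_lt_of_le hi.2 hRA)
        · intro i _ _; exact chi_nonneg A B i n

lemma abs_D_le (A B : Set ℕ) (hA : A.Infinite) (hB : B.Infinite)
    [DecidablePred (· ∈ A)] [DecidablePred (· ∈ B)]
    (n R : ℕ) (hRA : countFn A n ≤ R) (hRB : countFn B n ≤ R) :
    |(countFn A n : ℝ) - countFn B n| ≤ ∑ i ∈ Finset.range R, chi A B i n := by
  rcases le_total (countFn B n) (countFn A n) with h | h
  · rw [abs_of_nonneg (sub_nonneg.2 (Nat.cast_le.2 h))]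
    exact one_sided A B hA hB n R hRA h
  · rw [abs_of_nonpos (sub_nonpos.2 (Nat.cast_le.2 h)), neg_sub]
    simpa only [chi_comm A B] using one_sided B A hB hA n R hRB h

lemma geom_aux (u : Finset ℕ) : ∑ k ∈ u, ((k : ℝ) + 1) * (1 / 2) ^ k ≤ 4 := by
  have h1 : HasSum (fun k : ℕ => (k : ℝ) * (1 / 2) ^ k) ((1 / 2) / (1 - 1 / 2) ^ 2) :=
    hasSum_coe_mul_geometric_of_norm_lt_one (by norm_num)
  have h2 : HasSum (fun k : ℕ => ((1 : ℝ) / 2) ^ k) (1 - 1 / 2)⁻¹ :=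
    hasSum_geometric_of_lt_one (by norm_num) (by norm_num)
  have h3 : HasSum (fun k : ℕ => ((k : ℝ) + 1) * (1 / 2) ^ k) (4 : ℝ) := by
    have := h1.add h2
    convert this using 2 with k
    · ring
    · norm_num
  exact sum_le_hasSum u (fun k _ => by positivity) h3

lemma block_bound (A : Set ℕ) (β c : ℝ) (hβ0 : 0 < β) (hβ1 : β ≤ 1 / 2) (hc : 0 < c)
    (hA3 : ∀ n : ℕ, (countFn A n : ℝ) ≤ c * (n : ℝ) ^ β)
    (t : Finset ℕ) (ht : ∀ n ∈ t, n ∈ A) (N : ℕ) (hN : 1 ≤ N) :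
    ∑ n ∈ t, (n : ℝ) ^ β * Real.exp (-((n : ℝ) / N)) ≤ 4 * c * (N : ℝ) ^ (2 * β) := by
  classical
  have hN0 : (0 : ℝ) < N := by exact_mod_cast hN
  set u : Finset ℕ := Finset.range (t.sup id / N + 1) with hu
  have hmaps : ∀ n ∈ t, n / N ∈ u := by
    intro n hn
    exact Finset.mem_range.2 (Nat.lt_succ_of_le (Nat.div_le_div_right (Finset.le_sup (f := id) hn)))
  rw [← Finset.sum_fiberwise_of_maps_to hmaps]
  have inner : ∀ k ∈ u, (∑ n ∈ t.filter (fun n => n / N = k), (n : ℝ) ^ β * Real.exp (-((n : ℝ) / N)))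
      ≤ c * (((k : ℝ) + 1) * N) ^ β * ((((k : ℝ) + 1) * N) ^ β * Real.exp (-(k : ℝ))) := by
    intro k _
    have hbase : (0:ℝ) ≤ ((k : ℝ) + 1) * N := by positivity
    have hterm : ∀ n ∈ t.filter (fun n => n / N = k),
        (n : ℝ) ^ β * Real.exp (-((n : ℝ) / N)) ≤ (((k : ℝ) + 1) * N) ^ β * Real.exp (-(k : ℝ)) := by
      intro n hn
      rw [Finset.mem_filter] at hn
      have h1 : n < (k + 1) * N := (Nat.div_lt_iff_lt_mul (Nat.lt_of_lt_of_le one_pos hN)).1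
        (hn.2 ▸ Nat.lt_succ_self k)
      have h1' : (n : ℝ) ≤ ((k : ℝ) + 1) * N := by
        have h1'' : ((n : ℕ) : ℝ) ≤ (((k + 1) * N : ℕ) : ℝ) := Nat.cast_le.2 h1.le
        push_cast at h1''
        linarith
      have h2 : (k : ℝ) ≤ (n : ℝ) / N := by
        rw [le_div_iff₀ hN0]
        have : k * N ≤ n := hn.2 ▸ Nat.div_mul_le_self n N
        exact_mod_cast this
      exact mul_le_mul (Real.rpow_le_rpow (Nat.cast_nonneg n) h1' hβ0.le)
        (Real.exp_le_exp.2 (by linarith)) (Real.exp_pos _).le (Real.rpow_nonneg hbase _)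
    calc (∑ n ∈ t.filter (fun n => n / N = k), (n : ℝ) ^ β * Real.exp (-((n : ℝ) / N)))
        ≤ (t.filter (fun n => n / N = k)).card • ((((k : ℝ) + 1) * N) ^ β * Real.exp (-(k : ℝ))) :=
          Finset.sum_le_card_nsmul _ _ _ hterm
      _ ≤ (c * (((k : ℝ) + 1) * N) ^ β) * ((((k : ℝ) + 1) * N) ^ β * Real.exp (-(k : ℝ))) := by
          rw [nsmul_eq_mul]
          apply mul_le_mul_of_nonneg_right _ (by positivity)
          -- card ≤ countFn A ((k+1)*N) ≤ c * ((k+1)*N)^β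
          have hcard : ((t.filter (fun n => n / N = k)).card : ℝ) ≤ (countFn A ((k + 1) * N) : ℝ) := by
            have hsub : ((t.filter (fun n => n / N = k)) : Set ℕ) ⊆ A ∩ Set.Iic ((k + 1) * N) := by
              intro n hn
              simp only [Finset.coe_filter, Set.mem_setOf_eq] at hn
              exact ⟨ht n hn.1, le_of_lt ((Nat.div_lt_iff_lt_mul (Nat.lt_of_lt_of_le one_pos hN)).1
                (hn.2 ▸ Nat.lt_succ_self k))⟩
            have := Set.ncard_le_ncard hsub ((Set.finite_Iic _).inter_of_right _)
            rw [Set.ncard_coe_finset] at this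
            exact_mod_cast this
          refine hcard.trans ((hA3 _).trans_eq ?_)
          congr 1
          push_cast; ring
  calc (∑ k ∈ u, ∑ n ∈ t.filter (fun n => n / N = k), (n : ℝ) ^ β * Real.exp (-((n : ℝ) / N)))
      ≤ ∑ k ∈ u, c * (((k : ℝ) + 1) * N) ^ β * ((((k : ℝ) + 1) * N) ^ β * Real.exp (-(k : ℝ))) :=
        Finset.sum_le_sum inner
    _ ≤ ∑ k ∈ u, c * (N : ℝ) ^ (2 * β) * (((k : ℝ) + 1) * (1 / 2) ^ k) := by
        apply Finset.sum_le_sum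
        intro k _
        have hk1 : (1:ℝ) ≤ (k : ℝ) + 1 := by have := Nat.cast_nonneg (α := ℝ) k; linarith
        have hbase : (0:ℝ) < ((k : ℝ) + 1) * N := by positivity
        have e1 : c * (((k : ℝ) + 1) * N) ^ β * ((((k : ℝ) + 1) * N) ^ β * Real.exp (-(k : ℝ)))
            = c * (((k : ℝ) + 1) * N) ^ (2 * β) * Real.exp (-(k : ℝ)) := by
          rw [show (2 : ℝ) * β = β + β by ring, Real.rpow_add hbase]; ring
        rw [e1, Real.mul_rpow (by positivity) (by positivity)]
        have h4 : ((k : ℝ) + 1) ^ (2 * β) ≤ (k : ℝ) + 1 := by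
          calc ((k : ℝ) + 1) ^ (2 * β) ≤ ((k : ℝ) + 1) ^ (1 : ℝ) :=
                Real.rpow_le_rpow_of_exponent_le hk1 (by linarith)
            _ = (k : ℝ) + 1 := Real.rpow_one _
        have h5 : Real.exp (-(k : ℝ)) ≤ (1 / 2) ^ k := by
          have he : Real.exp (-(k : ℝ)) = Real.exp (-1) ^ k := by
            rw [← Real.exp_nat_mul]; ring_nf
          rw [he]
          apply pow_le_pow_left₀ (Real.exp_pos _).le
          rw [Real.exp_neg]
          have h2e : (2 : ℝ) ≤ Real.exp 1 := by
            have := Real.add_one_le_exp (1 : ℝ); linarith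
          calc (Real.exp 1)⁻¹ ≤ (2 : ℝ)⁻¹ := inv_anti₀ (by norm_num) h2e
            _ = 1 / 2 := by norm_num
        calc c * (((k : ℝ) + 1) ^ (2 * β) * (N : ℝ) ^ (2 * β)) * Real.exp (-(k : ℝ))
            = (c * (N : ℝ) ^ (2 * β)) * (((k : ℝ) + 1) ^ (2 * β) * Real.exp (-(k : ℝ))) := by ring
          _ ≤ (c * (N : ℝ) ^ (2 * β)) * (((k : ℝ) + 1) * (1 / 2) ^ k) := by
              apply mul_le_mul_of_nonneg_left _ (by positivity)
              exact mul_le_mul h4 h5 (Real.exp_pos _).le (by positivity)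
          _ = c * (N : ℝ) ^ (2 * β) * (((k : ℝ) + 1) * (1 / 2) ^ k) := by ring
    _ ≤ c * (N : ℝ) ^ (2 * β) * 4 := by
        rw [← Finset.mul_sum]
        exact mul_le_mul_of_nonneg_left (geom_aux u) (by positivity)
    _ = 4 * c * (N : ℝ) ^ (2 * β) := by ring

lemma inner_bound (A B : Set ℕ) (α : ℝ) (hα0 : 0 ≤ α) (y : ℝ) (hy0 : 0 ≤ y) (hy1 : y ≤ 1)
    (s : Finset ℕ) (i : ℕ) :
    ∑ n ∈ s, y ^ (2 * n) * ((n : ℝ) ^ α * chi A B i n) ≤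
      ((max (Nat.nth (· ∈ A) i) (Nat.nth (· ∈ B) i)
          - min (Nat.nth (· ∈ A) i) (Nat.nth (· ∈ B) i) : ℕ) : ℝ) *
        (((max (Nat.nth (· ∈ A) i) (Nat.nth (· ∈ B) i) : ℕ) : ℝ) ^ α *
          y ^ (2 * min (Nat.nth (· ∈ A) i) (Nat.nth (· ∈ B) i))) := by
  classical
  set m := min (Nat.nth (· ∈ A) i) (Nat.nth (· ∈ B) i) with hm
  set M := max (Nat.nth (· ∈ A) i) (Nat.nth (· ∈ B) i) with hM
  set bnd : ℝ := (M : ℝ) ^ α * y ^ (2 * m) with hbnd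
  have hbnd0 : 0 ≤ bnd := by positivity
  have hpt : ∀ n ∈ s, y ^ (2 * n) * ((n : ℝ) ^ α * chi A B i n) ≤
      if n ∈ Finset.Ico m M then bnd else 0 := by
    intro n _
    rw [chi, ← hm, ← hM]
    by_cases h : m ≤ n ∧ n < M
    · rw [if_pos h, if_pos (Finset.mem_Ico.2 h), mul_one]
      apply mul_le_mul (pow_le_pow_of_le_one hy0 hy1 (by omega))
        (Real.rpow_le_rpow (Nat.cast_nonneg _) (Nat.cast_le.2 h.2.le) hα0)
        (by positivity) (by positivity)
      |>.trans_eq (mul_comm _ _)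
    · rw [if_neg h, if_neg (fun hc => h (Finset.mem_Ico.1 hc)), mul_zero, mul_zero]
  calc ∑ n ∈ s, y ^ (2 * n) * ((n : ℝ) ^ α * chi A B i n)
      ≤ ∑ n ∈ s, (if n ∈ Finset.Ico m M then bnd else 0) := Finset.sum_le_sum hpt
    _ = ∑ n ∈ s ∩ Finset.Ico m M, bnd := Finset.sum_ite_mem s _ _
    _ = (s ∩ Finset.Ico m M).card • bnd := (Finset.sum_const bnd)
    _ ≤ ((M - m : ℕ) : ℝ) * bnd := by
        rw [nsmul_eq_mul]
        apply mul_le_mul_of_nonneg_right _ hbnd0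
        have : (s ∩ Finset.Ico m M).card ≤ M - m := by
          calc (s ∩ Finset.Ico m M).card ≤ (Finset.Ico m M).card :=
                Finset.card_le_card (Finset.inter_subset_right)
            _ = M - m := Nat.card_Ico m M
        exact_mod_cast this
set_option maxHeartbeats 1000000 in
theorem stmt6 (β α : ℝ) (hβ0 : 0 < β) (hβ1 : β ≤ 1 / 2)
    (hα0 : 0 ≤ α) (hα1 : α ≤ β / 2)
    (A B : Set ℕ) (hA : A.Infinite) (hB : B.Infinite)
    (h1 : (fun i : ℕ => (Nat.nth (· ∈ A) i : ℝ) - (Nat.nth (· ∈ B) i : ℝ))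
      =o[atTop] fun i : ℕ => (Nat.nth (· ∈ A) i : ℝ) ^ (β - α))
    (h2 : (fun n : ℕ => (countFn A n : ℝ) - (countFn B n : ℝ))
      =O[atTop] fun n : ℕ => (n : ℝ) ^ α)
    (h3 : ∃ c : ℝ, 0 < c ∧ ∀ n : ℕ,
      (countFn A n : ℝ) ≤ c * (n : ℝ) ^ β ∧ (countFn B n : ℝ) ≤ c * (n : ℝ) ^ β) :
    (fun N : ℕ => ∑' n : ℕ,
        (1 - 1 / (N : ℝ)) ^ (2 * n) * ((countFn A n : ℝ) - (countFn B n : ℝ)) ^ 2)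
      =o[atTop] fun N : ℕ => (N : ℝ) ^ (2 * β) := by
  classical
  obtain ⟨c, hc, h3⟩ := h3
  obtain ⟨C, hC0, hC⟩ := h2.exists_pos
  rw [IsBigOWith, eventually_atTop] at hC
  obtain ⟨n₁, hn₁⟩ := hC
  have hDb : ∀ n, n₁ ≤ n → |(countFn A n : ℝ) - countFn B n| ≤ C * (n : ℝ) ^ α := by
    intro n hn
    have := hn₁ n hn
    rwa [Real.norm_eq_abs, Real.norm_eq_abs,
      abs_of_nonneg (Real.rpow_nonneg (Nat.cast_nonneg n) α)] at this
  set a : ℕ → ℕ := Nat.nth (· ∈ A) with ha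
  set b : ℕ → ℕ := Nat.nth (· ∈ B) with hb
  rw [isLittleO_iff]
  intro ε hε
  set δ : ℝ := ε / (16 * c * C) with hδdef
  have hδ0 : 0 < δ := by positivity
  have h1' := (h1.def hδ0).and (h1.def one_pos)
  rw [eventually_atTop] at h1'
  obtain ⟨i₀', hi₀'⟩ := h1'
  set i₀ : ℕ := max i₀' 4 with hi₀def
  -- notation
  set m : ℕ → ℕ := fun i => min (a i) (b i) with hm
  set M : ℕ → ℕ := fun i => max (a i) (b i) with hM
  -- facts for i ≥ i₀
  have hα1' : α ≤ 1 := by linarith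
  have key : ∀ i, i₀ ≤ i → ∀ N : ℕ, 1 ≤ N →
      ((M i - m i : ℕ) : ℝ) * (((M i : ℕ) : ℝ) ^ α * (1 - 1 / (N : ℝ)) ^ (2 * m i)) ≤
        2 * δ * (((a i : ℕ) : ℝ) ^ β * Real.exp (-(((a i : ℕ) : ℝ) / N))) := by
    intro i hi N hN
    have hai4 : (4 : ℕ) ≤ a i := le_trans (le_trans (le_max_right _ _) hi)
      ((Nat.nth_strictMono hA).le_apply)
    have hai4' : (4 : ℝ) ≤ (a i : ℝ) := by exact_mod_cast hai4
    have hai0 : (0 : ℝ) < (a i : ℝ) := by linarith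
    have hai1 : (1 : ℝ) ≤ (a i : ℝ) := by linarith
    obtain ⟨hd1, hd2'⟩ := hi₀' i (le_trans (le_max_left _ _) hi)
    rw [Real.norm_eq_abs, Real.norm_eq_abs,
      abs_of_nonneg (Real.rpow_nonneg hai0.le _)] at hd1 hd2'
    have hd_eq : ((M i - m i : ℕ) : ℝ) = |(a i : ℝ) - (b i : ℝ)| := cast_max_sub_min _ _
    have hpow_half : ((a i : ℝ)) ^ (β - α) ≤ (a i : ℝ) / 2 := by
      have h1'' : ((a i : ℝ)) ^ (β - α) ≤ ((a i : ℝ)) ^ ((1:ℝ)/2) :=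
        Real.rpow_le_rpow_of_exponent_le hai1 (by linarith)
      have h2'' : ((a i : ℝ)) ^ ((1:ℝ)/2) = Real.sqrt ((a i : ℝ)) := (Real.sqrt_eq_rpow _).symm
      have h3'' : Real.sqrt ((a i : ℝ)) ≤ (a i : ℝ) / 2 := by
        rw [show (a i : ℝ) / 2 = Real.sqrt (((a i : ℝ) / 2) ^ 2) from
          (Real.sqrt_sq (by linarith)).symm]
        apply Real.sqrt_le_sqrt
        nlinarith
      calc ((a i : ℝ)) ^ (β - α) ≤ ((a i : ℝ)) ^ ((1:ℝ)/2) := h1''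
        _ = Real.sqrt ((a i : ℝ)) := h2''
        _ ≤ (a i : ℝ) / 2 := h3''
    have hd2 : ((M i - m i : ℕ) : ℝ) ≤ (a i : ℝ) / 2 := by
      rw [hd_eq]; exact le_trans hd2' (by simpa using hpow_half)
    have hd1' : ((M i - m i : ℕ) : ℝ) ≤ δ * ((a i : ℝ)) ^ (β - α) := by rw [hd_eq]; exact hd1
    have hMm : ((M i : ℕ) : ℝ) = ((m i : ℕ) : ℝ) + ((M i - m i : ℕ) : ℝ) := by
      have : m i ≤ M i := min_le_max
      push_cast [Nat.cast_sub this]; ring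
    have hma : ((m i : ℕ) : ℝ) ≤ (a i : ℝ) := by exact_mod_cast (min_le_left _ _ : m i ≤ a i)
    have haM : (a i : ℝ) ≤ ((M i : ℕ) : ℝ) := by exact_mod_cast (le_max_left _ _ : a i ≤ M i)
    have hMle : ((M i : ℕ) : ℝ) ≤ 2 * (a i : ℝ) := by rw [hMm]; linarith
    have hmge : (a i : ℝ) ≤ 2 * ((m i : ℕ) : ℝ) := by
      have : (a i : ℝ) - ((m i : ℕ) : ℝ) ≤ ((M i : ℕ) : ℝ) - ((m i : ℕ) : ℝ) := by linarith
      rw [hMm] at this; linarith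
    have hmge' : a i ≤ 2 * m i := by exact_mod_cast hmge
    -- y bounds
    have hN0 : (0 : ℝ) < (N : ℝ) := by exact_mod_cast hN
    set y : ℝ := 1 - 1 / (N : ℝ) with hy
    have hy0 : 0 ≤ y := by
      rw [hy, sub_nonneg]; rw [div_le_one hN0]; exact_mod_cast hN
    have hy1 : y ≤ 1 := by
      rw [hy]; have : 0 ≤ 1 / (N : ℝ) := by positivity
      linarith
    have hexp : y ^ (2 * m i) ≤ Real.exp (-((a i : ℝ) / N)) := by
      calc y ^ (2 * m i) ≤ y ^ (a i) := pow_le_pow_of_le_one hy0 hy1 hmge'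
        _ ≤ Real.exp (-(1 / (N : ℝ))) ^ (a i) := by
            apply pow_le_pow_left₀ hy0
            have := Real.add_one_le_exp (-(1 / (N : ℝ)))
            linarith
        _ = Real.exp (-((a i : ℝ) / N)) := by
            rw [← Real.exp_nat_mul]; congr 1; ring
    have hMα : ((M i : ℕ) : ℝ) ^ α ≤ 2 * ((a i : ℝ)) ^ α := by
      calc ((M i : ℕ) : ℝ) ^ α ≤ (2 * (a i : ℝ)) ^ α :=
            Real.rpow_le_rpow (Nat.cast_nonneg _) hMle hα0
        _ = (2:ℝ) ^ α * ((a i : ℝ)) ^ α := Real.mul_rpow (by norm_num) hai0.le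
        _ ≤ 2 * ((a i : ℝ)) ^ α := by
            apply mul_le_mul_of_nonneg_right _ (Real.rpow_nonneg hai0.le _)
            calc (2:ℝ) ^ α ≤ (2:ℝ) ^ (1:ℝ) :=
                  Real.rpow_le_rpow_of_exponent_le (by norm_num) hα1'
              _ = 2 := Real.rpow_one _
    calc ((M i - m i : ℕ) : ℝ) * (((M i : ℕ) : ℝ) ^ α * y ^ (2 * m i))
        ≤ (δ * ((a i : ℝ)) ^ (β - α)) * ((2 * ((a i : ℝ)) ^ α) * Real.exp (-((a i : ℝ) / N))) := by
          apply mul_le_mul hd1' _ (by positivity) (by positivity)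
          exact mul_le_mul hMα hexp (by positivity) (by positivity)
      _ = 2 * δ * ((((a i : ℝ)) ^ (β - α) * ((a i : ℝ)) ^ α) * Real.exp (-((a i : ℝ) / N))) := by
          ring
      _ = 2 * δ * (((a i : ℝ)) ^ β * Real.exp (-(((a i : ℕ) : ℝ) / N))) := by
          rw [← Real.rpow_add hai0]; ring_nf
  -- constants
  set K₂ : ℝ := ∑ n ∈ Finset.range n₁, ((countFn A n : ℝ) - countFn B n) ^ 2 with hK₂
  set K₃ : ℝ := ∑ i ∈ Finset.range i₀, ((M i - m i : ℕ) : ℝ) * ((M i : ℕ) : ℝ) ^ α with hK₃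
  have hK₂0 : 0 ≤ K₂ := Finset.sum_nonneg fun n _ => sq_nonneg _
  have hK₃0 : 0 ≤ K₃ := Finset.sum_nonneg fun i _ => by positivity
  have htend : Tendsto (fun N : ℕ => (N : ℝ) ^ (2 * β)) atTop atTop :=
    (tendsto_rpow_atTop (by linarith)).comp tendsto_natCast_atTop_atTop
  filter_upwards [eventually_ge_atTop 1,
    htend.eventually_ge_atTop ((K₂ + C * K₃) / (ε / 2))] with N hN1 hN2
  have hN0 : (0 : ℝ) < (N : ℝ) := by exact_mod_cast hN1
  have hhead : K₂ + C * K₃ ≤ ε / 2 * (N : ℝ) ^ (2 * β) := by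
    rw [div_le_iff₀ (by linarith)] at hN2
    linarith
  set y : ℝ := 1 - 1 / (N : ℝ) with hy
  have hy0 : 0 ≤ y := by
    rw [hy, sub_nonneg, div_le_one hN0]; exact_mod_cast hN1
  have hy1 : y ≤ 1 := by
    rw [hy]; have : 0 ≤ 1 / (N : ℝ) := by positivity
    linarith
  have hrpow_nonneg : 0 ≤ (N : ℝ) ^ (2 * β) := Real.rpow_nonneg hN0.le _
  rw [Real.norm_eq_abs, Real.norm_eq_abs, abs_of_nonneg hrpow_nonneg,
    abs_of_nonneg (tsum_nonneg fun n => by positivity)]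
  apply tsum_le_of_sum_le' (by positivity)
  intro s
  -- finite sum chain
  set T : ℕ := s.sup id with hT
  set R : ℕ := max (countFn A T) (countFn B T) with hR
  have hchain1 : ∀ n ∈ s, y ^ (2 * n) * ((countFn A n : ℝ) - countFn B n) ^ 2 ≤
      (if n < n₁ then ((countFn A n : ℝ) - countFn B n) ^ 2 else 0) +
        C * (y ^ (2 * n) * ((n : ℝ) ^ α * |(countFn A n : ℝ) - countFn B n|)) := by
    intro n _
    by_cases h : n < n₁
    · rw [if_pos h]
      have h1'' : y ^ (2 * n) * ((countFn A n : ℝ) - countFn B n) ^ 2 ≤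
          ((countFn A n : ℝ) - countFn B n) ^ 2 := by
        apply mul_le_of_le_one_left (sq_nonneg _) (pow_le_one₀ hy0 hy1)
      have h2'' : 0 ≤ C * (y ^ (2 * n) * ((n : ℝ) ^ α * |(countFn A n : ℝ) - countFn B n|)) := by
        positivity
      linarith
    · rw [if_neg h, zero_add]
      have hDn := hDb n (not_lt.1 h)
      calc y ^ (2 * n) * ((countFn A n : ℝ) - countFn B n) ^ 2
          = y ^ (2 * n) * (|(countFn A n : ℝ) - countFn B n| * |(countFn A n : ℝ) - countFn B n|) := by
            rw [abs_mul_abs_self, sq]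
        _ ≤ y ^ (2 * n) * ((C * (n : ℝ) ^ α) * |(countFn A n : ℝ) - countFn B n|) := by
            apply mul_le_mul_of_nonneg_left _ (by positivity)
            exact mul_le_mul_of_nonneg_right hDn (abs_nonneg _)
        _ = C * (y ^ (2 * n) * ((n : ℝ) ^ α * |(countFn A n : ℝ) - countFn B n|)) := by ring
  have hstep1 : ∑ n ∈ s, y ^ (2 * n) * ((countFn A n : ℝ) - countFn B n) ^ 2 ≤
      K₂ + C * ∑ n ∈ s, y ^ (2 * n) * ((n : ℝ) ^ α * |(countFn A n : ℝ) - countFn B n|) := by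
    calc ∑ n ∈ s, y ^ (2 * n) * ((countFn A n : ℝ) - countFn B n) ^ 2
        ≤ ∑ n ∈ s, ((if n < n₁ then ((countFn A n : ℝ) - countFn B n) ^ 2 else 0) +
            C * (y ^ (2 * n) * ((n : ℝ) ^ α * |(countFn A n : ℝ) - countFn B n|))) :=
          Finset.sum_le_sum hchain1
      _ = (∑ n ∈ s, if n < n₁ then ((countFn A n : ℝ) - countFn B n) ^ 2 else 0) +
          C * ∑ n ∈ s, y ^ (2 * n) * ((n : ℝ) ^ α * |(countFn A n : ℝ) - countFn B n|) := by
          rw [Finset.sum_add_distrib, Finset.mul_sum]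
      _ ≤ K₂ + C * ∑ n ∈ s, y ^ (2 * n) * ((n : ℝ) ^ α * |(countFn A n : ℝ) - countFn B n|) := by
          apply add_le_add_left
          rw [← Finset.sum_filter]
          apply Finset.sum_le_sum_of_subset_of_nonneg
          · intro n hn
            rw [Finset.mem_filter] at hn
            exact Finset.mem_range.2 hn.2
          · intro n _ _; exact sq_nonneg _
  have hstep2 : ∑ n ∈ s, y ^ (2 * n) * ((n : ℝ) ^ α * |(countFn A n : ℝ) - countFn B n|) ≤
      ∑ i ∈ Finset.range R, ∑ n ∈ s, y ^ (2 * n) * ((n : ℝ) ^ α * chi A B i n) := by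
    rw [Finset.sum_comm]
    apply Finset.sum_le_sum
    intro n hn
    have hnT : n ≤ T := Finset.le_sup (f := id) hn
    have hD_le : |(countFn A n : ℝ) - countFn B n| ≤ ∑ i ∈ Finset.range R, chi A B i n :=
      abs_D_le A B hA hB n R (le_trans (countFn_mono A hnT) (le_max_left _ _))
        (le_trans (countFn_mono B hnT) (le_max_right _ _))
    calc y ^ (2 * n) * ((n : ℝ) ^ α * |(countFn A n : ℝ) - countFn B n|)
        ≤ y ^ (2 * n) * ((n : ℝ) ^ α * ∑ i ∈ Finset.range R, chi A B i n) := by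
          apply mul_le_mul_of_nonneg_left _ (by positivity)
          exact mul_le_mul_of_nonneg_left hD_le (by positivity)
      _ = ∑ i ∈ Finset.range R, y ^ (2 * n) * ((n : ℝ) ^ α * chi A B i n) := by
          rw [Finset.mul_sum, Finset.mul_sum]
  have hstep3 : ∑ i ∈ Finset.range R, ∑ n ∈ s, y ^ (2 * n) * ((n : ℝ) ^ α * chi A B i n) ≤
      ∑ i ∈ Finset.range R,
        ((M i - m i : ℕ) : ℝ) * (((M i : ℕ) : ℝ) ^ α * y ^ (2 * m i)) :=
    Finset.sum_le_sum fun i _ => inner_bound A B α hα0 y hy0 hy1 s i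
  have hstep4 : ∑ i ∈ Finset.range R,
      ((M i - m i : ℕ) : ℝ) * (((M i : ℕ) : ℝ) ^ α * y ^ (2 * m i)) ≤
      K₃ + 2 * δ * (4 * c * (N : ℝ) ^ (2 * β)) := by
    rw [← Finset.sum_filter_add_sum_filter_not (Finset.range R) (· < i₀)]
    apply add_le_add
    · -- head
      calc ∑ i ∈ (Finset.range R).filter (· < i₀),
            ((M i - m i : ℕ) : ℝ) * (((M i : ℕ) : ℝ) ^ α * y ^ (2 * m i))
          ≤ ∑ i ∈ (Finset.range R).filter (· < i₀),
            ((M i - m i : ℕ) : ℝ) * ((M i : ℕ) : ℝ) ^ α := by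
            apply Finset.sum_le_sum
            intro i _
            apply mul_le_mul_of_nonneg_left _ (Nat.cast_nonneg _)
            exact mul_le_of_le_one_right (by positivity) (pow_le_one₀ hy0 hy1)
        _ ≤ K₃ := by
            apply Finset.sum_le_sum_of_subset_of_nonneg
            · intro i hi
              rw [Finset.mem_filter] at hi
              exact Finset.mem_range.2 hi.2
            · intro i _ _; positivity
    · -- tail
      have htail : ∀ i ∈ (Finset.range R).filter (fun i => ¬ i < i₀),
          ((M i - m i : ℕ) : ℝ) * (((M i : ℕ) : ℝ) ^ α * y ^ (2 * m i)) ≤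
            2 * δ * (((a i : ℕ) : ℝ) ^ β * Real.exp (-(((a i : ℕ) : ℝ) / N))) := by
        intro i hi
        rw [Finset.mem_filter] at hi
        exact key i (not_lt.1 hi.2) N hN1
      calc ∑ i ∈ (Finset.range R).filter (fun i => ¬ i < i₀),
            ((M i - m i : ℕ) : ℝ) * (((M i : ℕ) : ℝ) ^ α * y ^ (2 * m i))
          ≤ ∑ i ∈ (Finset.range R).filter (fun i => ¬ i < i₀),
            2 * δ * (((a i : ℕ) : ℝ) ^ β * Real.exp (-(((a i : ℕ) : ℝ) / N))) :=
            Finset.sum_le_sum htail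
        _ = 2 * δ * ∑ i ∈ (Finset.range R).filter (fun i => ¬ i < i₀),
            (((a i : ℕ) : ℝ) ^ β * Real.exp (-(((a i : ℕ) : ℝ) / N))) := by
            rw [Finset.mul_sum]
        _ = 2 * δ * ∑ n ∈ ((Finset.range R).filter (fun i => ¬ i < i₀)).image a,
            ((n : ℝ) ^ β * Real.exp (-((n : ℝ) / N))) := by
            congr 1
            rw [Finset.sum_image]
            intro x _ z _ hxz
            exact (Nat.nth_strictMono hA).injective hxz
        _ ≤ 2 * δ * (4 * c * (N : ℝ) ^ (2 * β)) := by
            apply mul_le_mul_of_nonneg_left _ (by positivity)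
            apply block_bound A β c hβ0 hβ1 hc (fun n => (h3 n).1) _ _ N hN1
            intro n hn
            rw [Finset.mem_image] at hn
            obtain ⟨i, _, rfl⟩ := hn
            exact Nat.nth_mem_of_infinite hA i
  have hfinal : ∑ n ∈ s, y ^ (2 * n) * ((countFn A n : ℝ) - countFn B n) ^ 2 ≤
      K₂ + C * K₃ + ε / 2 * (N : ℝ) ^ (2 * β) := by
    have h8 : C * (2 * δ * (4 * c * (N : ℝ) ^ (2 * β))) = ε / 2 * (N : ℝ) ^ (2 * β) := by
      rw [hδdef]; field_simp; ring
    calc ∑ n ∈ s, y ^ (2 * n) * ((countFn A n : ℝ) - countFn B n) ^ 2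
        ≤ K₂ + C * ∑ n ∈ s, y ^ (2 * n) * ((n : ℝ) ^ α * |(countFn A n : ℝ) - countFn B n|) :=
          hstep1
      _ ≤ K₂ + C * (K₃ + 2 * δ * (4 * c * (N : ℝ) ^ (2 * β))) := by
          apply add_le_add_right
          apply mul_le_mul_of_nonneg_left _ hC0.le
          exact le_trans hstep2 (le_trans hstep3 hstep4)
      _ = K₂ + C * K₃ + C * (2 * δ * (4 * c * (N : ℝ) ^ (2 * β))) := by ring
      _ = K₂ + C * K₃ + ε / 2 * (N : ℝ) ^ (2 * β) := by rw [h8]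
  calc ∑ n ∈ s, y ^ (2 * n) * ((countFn A n : ℝ) - countFn B n) ^ 2
      ≤ K₂ + C * K₃ + ε / 2 * (N : ℝ) ^ (2 * β) := hfinal
    _ ≤ ε / 2 * (N : ℝ) ^ (2 * β) + ε / 2 * (N : ℝ) ^ (2 * β) := by linarith
    _ = ε * (N : ℝ) ^ (2 * β) := by ring
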